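/- Every σ-rigid ring satisfies condition (C_σ) and is reduced; moreover a ring R is σ-rigid if and only if R is (σ,δ)-compatible and reduced. -/

import Mathlib

/-- δ is a σ-derivation: δ(ab) = σ(a)δ(b) + δ(a)b. -/
def IsSigmaDerivation {R : Type*} [Ring R] (σ : R →+* R) (δ : R →+ R) : Prop :=
  ∀ a b : R, δ (a * b) = σ a * δ b + δ a * b

/-- Condition (C_σ): a·σ(b) = 0 implies a·b = 0. -/
def CondC {R : Type*} [Ring R] (σ : R →+* R) : Prop :=
  ∀ a b : R, a * σ b = 0 → a * b = 0

/-- σ-rigid: a·σ(a) = 0 implies a = 0. -/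
def SigmaRigid {R : Type*} [Ring R] (σ : R →+* R) : Prop :=
  ∀ a : R, a * σ a = 0 → a = 0

private lemma rigid_sq {R : Type*} [Ring R] {σ : R →+* R} (h : SigmaRigid σ)
    {a : R} (ha : a * a = 0) : a = 0 := by
  apply h
  apply h (a * σ a)
  have : (a * σ a) * σ (a * σ a) = a * σ (a * a) * σ (σ a) := by
    simp only [map_mul]; noncomm_ring
  rw [this, ha, map_zero, mul_zero, zero_mul]

private lemma sq_reduced {R : Type*} [Ring R]
    (h : ∀ a : R, a * a = 0 → a = 0) : IsReduced R := by
  constructor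
  rintro x ⟨n, hn⟩
  have key : ∀ k : ℕ, x ^ (2 ^ k) = 0 → x = 0 := by
    intro k
    induction k with
    | zero => intro hx; simpa using hx
    | succ k ih =>
      intro hx
      apply ih
      apply h
      rw [← pow_add, ← two_mul, ← pow_succ']
      exact hx
  rcases Nat.eq_zero_or_pos n with rfl | hpos
  · have h1 : (1 : R) = 0 := by simpa using hn
    calc x = x * 1 := (mul_one x).symm
      _ = 0 := by rw [h1, mul_zero]
  · apply key n
    have hle : n ≤ 2 ^ n := Nat.le_of_lt (Nat.lt_two_pow_self (n := n))
    calc x ^ (2 ^ n) = x ^ n * x ^ (2 ^ n - n) := by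
          rw [← pow_add, Nat.add_sub_cancel' hle]
      _ = 0 := by rw [hn, zero_mul]

private lemma rigid_comm {R : Type*} [Ring R] {σ : R →+* R} (h : SigmaRigid σ)
    {a b : R} (hab : a * b = 0) : b * a = 0 := by
  apply rigid_sq h
  calc (b * a) * (b * a) = b * (a * b) * a := by noncomm_ring
    _ = 0 := by rw [hab, mul_zero, zero_mul]

private lemma rigid_condC {R : Type*} [Ring R] {σ : R →+* R} (h : SigmaRigid σ) :
    CondC σ := by
  intro a b hab
  have hba : b * a = 0 := by
    apply h
    calc (b * a) * σ (b * a) = b * (a * σ b) * σ a := by simp only [map_mul]; noncomm_ring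
      _ = 0 := by rw [hab, mul_zero, zero_mul]
  apply rigid_sq h
  calc (a * b) * (a * b) = a * (b * a) * b := by noncomm_ring
    _ = 0 := by rw [hba, mul_zero, zero_mul]

private lemma rigid_sigma_compat {R : Type*} [Ring R] {σ : R →+* R} (h : SigmaRigid σ)
    {a b : R} (hab : a * b = 0) : a * σ b = 0 := by
  have hba : b * a = 0 := rigid_comm h hab
  apply h
  calc (a * σ b) * σ (a * σ b) = a * σ (b * a) * σ (σ b) := by
        simp only [map_mul]; noncomm_ring
    _ = 0 := by rw [hba, map_zero, mul_zero, zero_mul]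

/-- Every σ-rigid ring satisfies (C_σ) and is reduced; and R is σ-rigid iff R is
(σ,δ)-compatible and reduced. -/
theorem stmt18 {R : Type*} [Ring R] (σ : R →+* R) (δ : R →+ R)
    (hδ : IsSigmaDerivation σ δ) :
    (SigmaRigid σ → CondC σ ∧ IsReduced R) ∧
      (SigmaRigid σ ↔
        ((∀ a b : R, a * b = 0 ↔ a * σ b = 0) ∧
          (∀ a b : R, a * b = 0 → a * δ b = 0) ∧ IsReduced R)) := by
  constructor
  · intro h
    exact ⟨rigid_condC h, sq_reduced (fun a ha => rigid_sq h ha)⟩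
  constructor
  · intro h
    refine ⟨fun a b => ⟨rigid_sigma_compat h, rigid_condC h a b⟩, ?_, sq_reduced (fun a ha => rigid_sq h ha)⟩
    intro a b hab
    have hba : b * a = 0 := rigid_comm h hab
    have hd : σ b * δ a + δ b * a = 0 := by
      have := hδ b a
      rw [hba, map_zero] at this
      exact this.symm
    have h1 : a * σ b * δ a + a * δ b * a = 0 := by
      calc a * σ b * δ a + a * δ b * a = a * (σ b * δ a + δ b * a) := by noncomm_ring
        _ = 0 := by rw [hd, mul_zero]
    have h2 : a * σ b = 0 := rigid_sigma_compat h hab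
    have h3 : a * δ b * a = 0 := by
      rw [h2, zero_mul, zero_add] at h1
      exact h1
    apply rigid_sq h
    calc (a * δ b) * (a * δ b) = (a * δ b * a) * δ b := by noncomm_ring
      _ = 0 := by rw [h3, zero_mul]
  · rintro ⟨hσ, hδc, hred⟩ a ha
    have haa : a * a = 0 := (hσ a a).mpr ha
    exact hred.eq_zero a ⟨2, by rw [pow_two]; exact haa⟩
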